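/- Let α0 ∈ (0,1) be the unique value with (1+P1)^{2·α0} = 1 + 2·P1 (so that γ2(α0) = 2·P1). Then the one-sided limit of ι(α) as α → α0 from above equals (1/4)·(1 − 1/√(1 + 2·P1)), which also equals (1/4)·γ1(α0)/(γ1(α0) + 1) with γ1(α0) = √(1 + 2·P1) − 1. -/

import Mathlib

/-- Let `α0 ∈ (0,1)` be the unique value with
`(1+P1)^{2·α0} = 1 + 2·P1` (so `γ2(α0) = 2·P1`). Then the one-sided limit of
`ι(α)` as `α → α0⁺` equals `(1/4)·(1 − 1/√(1 + 2·P1))`, which also equals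
`(1/4)·γ1(α0)/(γ1(α0) + 1)` with `γ1(α0) = √(1 + 2·P1) − 1`. -/
theorem stmt18 (P1 : ℝ) (hP1 : 0 < P1)
    (γ1f γ2f ιf : ℝ → ℝ)
    (hγ1 : ∀ α, γ1f α = (1 + P1) ^ α - 1)
    (hγ2 : ∀ α, γ2f α = (1 + P1) ^ (2 * α) - 1)
    (hι : ∀ α, ιf α = if 2 * P1 < γ2f α then
        (P1 - γ1f α) ^ 2
          / ((γ2f α - γ1f α) * (Real.sqrt (γ2f α - 2 * P1) - γ1f α) ^ 2)
        else 0)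
    (α0 : ℝ) (hα0 : α0 ∈ Set.Ioo (0:ℝ) 1)
    (hα0eq : (1 + P1) ^ (2 * α0) = 1 + 2 * P1)
    (hα0uniq : ∀ β ∈ Set.Ioo (0:ℝ) 1, (1 + P1) ^ (2 * β) = 1 + 2 * P1 → β = α0) :
    Filter.Tendsto ιf (nhdsWithin α0 (Set.Ioi α0))
      (nhds ((1 / 4) * (1 - 1 / Real.sqrt (1 + 2 * P1))))
    ∧ γ1f α0 = Real.sqrt (1 + 2 * P1) - 1
    ∧ (1 / 4) * (1 - 1 / Real.sqrt (1 + 2 * P1))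
        = (1 / 4) * (γ1f α0 / (γ1f α0 + 1)) := by
  have h2P : (0:ℝ) < 1 + 2 * P1 := by linarith
  have hbase : (1:ℝ) < 1 + P1 := by linarith
  have hbase0 : (0:ℝ) < 1 + P1 := by linarith
  set s := Real.sqrt (1 + 2 * P1) with hs_def
  have hs_nonneg : 0 ≤ s := Real.sqrt_nonneg _
  have hs2 : s ^ 2 = 1 + 2 * P1 := Real.sq_sqrt h2P.le
  have hs1 : 1 < s := by nlinarith
  -- (1+P1)^α0 = s
  have hA : (1 + P1) ^ α0 = s := by
    have hpos : 0 < (1 + P1 : ℝ) ^ α0 := Real.rpow_pos_of_pos hbase0 _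
    have h1 : ((1 + P1 : ℝ) ^ α0) ^ 2 = s ^ 2 := by
      rw [hs2, ← hα0eq, ← Real.rpow_natCast ((1 + P1 : ℝ) ^ α0) 2,
        ← Real.rpow_mul hbase0.le]
      norm_num [mul_comm]
    nlinarith
  have hγ1α0 : γ1f α0 = s - 1 := by rw [hγ1, hA]
  have hγ2α0 : γ2f α0 = 2 * P1 := by rw [hγ2, hα0eq]; ring
  -- the "inner" function
  set g : ℝ → ℝ := fun α => (P1 - γ1f α) ^ 2
      / ((γ2f α - γ1f α) * (Real.sqrt (γ2f α - 2 * P1) - γ1f α) ^ 2) with hg_def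
  have cA : ∀ x : ℝ, ContinuousAt (fun α : ℝ => (1 + P1 : ℝ) ^ α) x := by
    intro x
    exact Real.continuousAt_const_rpow hbase0.ne'
  have cγ1 : ContinuousAt γ1f α0 := by
    have : γ1f = fun α => (1 + P1 : ℝ) ^ α - 1 := funext hγ1
    rw [this]
    exact (cA α0).sub continuousAt_const
  have cγ2 : ContinuousAt γ2f α0 := by
    have h2 : γ2f = (fun α : ℝ => (1 + P1 : ℝ) ^ α - 1) ∘ (fun α : ℝ => 2 * α) := by
      funext α; simp [hγ2, Function.comp]
    rw [h2]
    exact ((cA (2 * α0)).sub continuousAt_const).comp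
      (continuousAt_const.mul continuousAt_id)
  have csqrt : ContinuousAt (fun α => Real.sqrt (γ2f α - 2 * P1)) α0 :=
    Real.continuous_sqrt.continuousAt.comp (cγ2.sub continuousAt_const)
  have hden_val : (γ2f α0 - γ1f α0) * (Real.sqrt (γ2f α0 - 2 * P1) - γ1f α0) ^ 2
      = s * (s - 1) ^ 3 := by
    rw [hγ1α0, hγ2α0]
    simp only [sub_self, Real.sqrt_zero]
    nlinarith
  have hden_ne : (γ2f α0 - γ1f α0) * (Real.sqrt (γ2f α0 - 2 * P1) - γ1f α0) ^ 2 ≠ 0 := by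
    rw [hden_val]
    have h1 : (0:ℝ) < s - 1 := by linarith
    exact (mul_pos (by linarith : (0:ℝ) < s) (pow_pos h1 3)).ne'
  have cg : ContinuousAt g α0 :=
    ((continuousAt_const.sub cγ1).pow 2).div
      ((cγ2.sub cγ1).mul ((csqrt.sub cγ1).pow 2)) hden_ne
  have hgval : g α0 = (1 / 4) * (1 - 1 / s) := by
    rw [hg_def]
    simp only
    rw [hden_val, hγ1α0]
    have hnum : (P1 - (s - 1)) ^ 2 = (s - 1) ^ 4 / 4 := by nlinarith
    rw [hnum]
    have hs0 : s ≠ 0 := by linarith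
    have hs10 : s - 1 ≠ 0 := by linarith
    field_simp
  have htg : Filter.Tendsto g (nhdsWithin α0 (Set.Ioi α0))
      (nhds ((1 / 4) * (1 - 1 / s))) := by
    rw [← hgval]
    exact cg.continuousWithinAt.tendsto
  have heq : g =ᶠ[nhdsWithin α0 (Set.Ioi α0)] ιf := by
    apply Filter.eventuallyEq_of_mem self_mem_nhdsWithin
    intro α hα
    have hlt : 2 * P1 < γ2f α := by
      rw [hγ2]
      have : (1 + P1 : ℝ) ^ (2 * α0) < (1 + P1 : ℝ) ^ (2 * α) :=
        Real.rpow_lt_rpow_of_exponent_lt hbase (by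
          have : α0 < α := hα
          linarith)
      rw [hα0eq] at this
      linarith
    rw [hι α, if_pos hlt]
  refine ⟨htg.congr' heq, hγ1α0, ?_⟩
  rw [hγ1α0]
  have hs0 : s ≠ 0 := by linarith
  field_simp
  rw [sub_add_cancel, mul_div_cancel_left₀ _ hs0]
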